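/- For p ∈ {0, 2} and α > 0, define F_p(α) = ∫_{ℝ³} |v|^p · (α·e^{−|v|²/2})/(1 + α·e^{−|v|²/2}) dv (Lebesgue integral over ℝ³). Then F₂ is differentiable at every α > 0 and α·F₂′(α) = 3·F₀(α). -/

import Mathlib

open MeasureTheory

/-- The Fermi integral `F_p α = ∫_{ℝ³} |v|^p (α e^{-|v|²/2})/(1 + α e^{-|v|²/2}) dv`. -/
noncomputable def fermiIntegral (p : ℝ) (α : ℝ) : ℝ :=
  ∫ v : EuclideanSpace ℝ (Fin 3),
    ‖v‖ ^ p * (α * Real.exp (-‖v‖ ^ 2 / 2)) / (1 + α * Real.exp (-‖v‖ ^ 2 / 2))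
open MeasureTheory Real Set Filter Metric

-- integrability of r^k e^{-r^2/2} on (0,∞)
lemma fermiAux_int_pow_exp (k : ℕ) :
    IntegrableOn (fun r : ℝ => r ^ k * Real.exp (-r ^ 2 / 2)) (Ioi 0) := by
  have h := integrableOn_rpow_mul_exp_neg_mul_sq (b := 1/2) (by norm_num)
    (s := (k : ℝ)) (lt_of_lt_of_le neg_one_lt_zero (Nat.cast_nonneg k))
  refine h.congr_fun (fun x _ => ?_) measurableSet_Ioi
  beta_reduce
  rw [rpow_natCast, show -(1/2 : ℝ) * x ^ 2 = -x ^ 2 / 2 by ring]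

-- polar coordinates reduction
lemma fermiAux_polar (p α : ℝ) :
    fermiIntegral p α = (3 * (volume (ball (0 : EuclideanSpace ℝ (Fin 3)) 1)).toReal) *
      ∫ r in Ioi (0 : ℝ),
        r ^ 2 * (r ^ p * (α * Real.exp (-r ^ 2 / 2)) / (1 + α * Real.exp (-r ^ 2 / 2))) := by
  have h := integral_fun_norm_addHaar (volume : Measure (EuclideanSpace ℝ (Fin 3)))
    (fun r : ℝ => r ^ p * (α * Real.exp (-r ^ 2 / 2)) / (1 + α * Real.exp (-r ^ 2 / 2)))
  simp only [finrank_euclideanSpace_fin, smul_eq_mul, nsmul_eq_mul] at h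
  rw [fermiIntegral, h]
  push_cast
  rw [measureReal_def]
  ring

lemma fermiAux_hasDerivAt_param (r : ℝ) {x : ℝ} (hx : 0 < x) :
    HasDerivAt (fun y : ℝ => r ^ 4 * (y * Real.exp (-r ^ 2 / 2)) / (1 + y * Real.exp (-r ^ 2 / 2)))
      (r ^ 4 * Real.exp (-r ^ 2 / 2) / (1 + x * Real.exp (-r ^ 2 / 2)) ^ 2) x := by
  have hEpos : 0 < Real.exp (-r ^ 2 / 2) := Real.exp_pos _
  have hden : (1 : ℝ) + x * Real.exp (-r ^ 2 / 2) ≠ 0 := by positivity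
  have h1 : HasDerivAt (fun y : ℝ => r ^ 4 * (y * Real.exp (-r ^ 2 / 2)))
      (r ^ 4 * Real.exp (-r ^ 2 / 2)) x := by
    simpa using ((hasDerivAt_id x).mul_const (Real.exp (-r ^ 2 / 2))).const_mul (r ^ 4)
  have h2 : HasDerivAt (fun y : ℝ => 1 + y * Real.exp (-r ^ 2 / 2)) (Real.exp (-r ^ 2 / 2)) x := by
    simpa using ((hasDerivAt_id x).mul_const (Real.exp (-r ^ 2 / 2))).const_add 1
  have h3 : HasDerivAt (fun y : ℝ => r ^ 4 * (y * Real.exp (-r ^ 2 / 2)) / (1 + y * Real.exp (-r ^ 2 / 2))) _ x :=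
    h1.div h2 hden
  convert h3 using 1
  field_simp
  ring

lemma fermiAux_hasDerivAt_rad (α : ℝ) (hα : 0 < α) (r : ℝ) :
    HasDerivAt (fun s : ℝ => s ^ 3 * (α * Real.exp (-s ^ 2 / 2)) / (1 + α * Real.exp (-s ^ 2 / 2)))
      (3 * r ^ 2 * (α * Real.exp (-r ^ 2 / 2)) / (1 + α * Real.exp (-r ^ 2 / 2))
        - α * (r ^ 4 * Real.exp (-r ^ 2 / 2) / (1 + α * Real.exp (-r ^ 2 / 2)) ^ 2)) r := by
  have hEpos : 0 < Real.exp (-r ^ 2 / 2) := Real.exp_pos _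
  have hE : HasDerivAt (fun s : ℝ => Real.exp (-s ^ 2 / 2)) (-r * Real.exp (-r ^ 2 / 2)) r := by
    have h0 : HasDerivAt (fun s : ℝ => -s ^ 2 / 2) (-r) r := by
      have h : HasDerivAt (fun s : ℝ => -s ^ 2 / 2) _ r := (hasDerivAt_pow 2 r).neg.div_const 2
      convert h using 1
      push_cast
      ring
    simpa [mul_comm] using h0.exp
  have hden : (1 : ℝ) + α * Real.exp (-r ^ 2 / 2) ≠ 0 := by positivity
  have hnum : HasDerivAt (fun s : ℝ => s ^ 3 * (α * Real.exp (-s ^ 2 / 2)))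
      (3 * r ^ 2 * (α * Real.exp (-r ^ 2 / 2)) + r ^ 3 * (α * (-r * Real.exp (-r ^ 2 / 2)))) r := by
    have h : HasDerivAt (fun s : ℝ => s ^ 3 * (α * Real.exp (-s ^ 2 / 2))) _ r :=
      (hasDerivAt_pow 3 r).mul (hE.const_mul α)
    convert h using 1
    try push_cast
    try ring
  have hg : HasDerivAt (fun s : ℝ => 1 + α * Real.exp (-s ^ 2 / 2))
      (α * (-r * Real.exp (-r ^ 2 / 2))) r := (hE.const_mul α).const_add 1
  have h : HasDerivAt (fun s : ℝ => s ^ 3 * (α * Real.exp (-s ^ 2 / 2)) / (1 + α * Real.exp (-s ^ 2 / 2))) _ r :=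
    hnum.div hg hden
  convert h using 1
  field_simp
  ring
/-- `F₂` is differentiable at every `α > 0` and `α * F₂′(α) = 3 * F₀(α)`. -/
theorem fermiIntegral_deriv (α : ℝ) (hα : 0 < α) :
    DifferentiableAt ℝ (fermiIntegral 2) α ∧
      α * deriv (fermiIntegral 2) α = 3 * fermiIntegral 0 α := by
  set C : ℝ := 3 * (volume (ball (0 : EuclideanSpace ℝ (Fin 3)) 1)).toReal with hC
  -- F₂ as a radial integral
  have h2 : fermiIntegral 2 = fun x : ℝ =>
      C * ∫ r in Ioi (0:ℝ), r ^ 4 * (x * Real.exp (-r ^ 2 / 2)) / (1 + x * Real.exp (-r ^ 2 / 2)) := by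
    funext x
    rw [fermiAux_polar 2 x]
    congr 1
    have he : (fun r : ℝ => r ^ 2 * (r ^ (2:ℝ) * (x * Real.exp (-r ^ 2 / 2)) / (1 + x * Real.exp (-r ^ 2 / 2))))
        = fun r : ℝ => r ^ 4 * (x * Real.exp (-r ^ 2 / 2)) / (1 + x * Real.exp (-r ^ 2 / 2)) := by
      funext r
      rw [show (2:ℝ) = ((2:ℕ):ℝ) by norm_num, Real.rpow_natCast]
      ring
    rw [he]
  -- F₀ as a radial integral
  have h0 : fermiIntegral 0 α =
      C * ∫ r in Ioi (0:ℝ), r ^ 2 * (α * Real.exp (-r ^ 2 / 2)) / (1 + α * Real.exp (-r ^ 2 / 2)) := by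
    rw [fermiAux_polar 0 α]
    congr 1
    have he : (fun r : ℝ => r ^ 2 * (r ^ (0:ℝ) * (α * Real.exp (-r ^ 2 / 2)) / (1 + α * Real.exp (-r ^ 2 / 2))))
        = fun r : ℝ => r ^ 2 * (α * Real.exp (-r ^ 2 / 2)) / (1 + α * Real.exp (-r ^ 2 / 2)) := by
      funext r
      rw [Real.rpow_zero]
      ring
    rw [he]
  -- measurability
  have meas : ∀ x : ℝ, AEStronglyMeasurable
      (fun r : ℝ => r ^ 4 * (x * Real.exp (-r ^ 2 / 2)) / (1 + x * Real.exp (-r ^ 2 / 2)))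
      (volume.restrict (Ioi 0)) := by
    intro x
    exact (by fun_prop : Measurable (fun r : ℝ =>
      r ^ 4 * (x * Real.exp (-r ^ 2 / 2)) / (1 + x * Real.exp (-r ^ 2 / 2)))).aestronglyMeasurable
  have meas' : AEStronglyMeasurable
      (fun r : ℝ => r ^ 4 * Real.exp (-r ^ 2 / 2) / (1 + α * Real.exp (-r ^ 2 / 2)) ^ 2)
      (volume.restrict (Ioi 0)) :=
    (by fun_prop : Measurable (fun r : ℝ =>
      r ^ 4 * Real.exp (-r ^ 2 / 2) / (1 + α * Real.exp (-r ^ 2 / 2)) ^ 2)).aestronglyMeasurable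
  -- bound on the α-derivative
  have hbound1 : ∀ x : ℝ, 0 ≤ x → ∀ r : ℝ,
      ‖r ^ 4 * Real.exp (-r ^ 2 / 2) / (1 + x * Real.exp (-r ^ 2 / 2)) ^ 2‖
        ≤ r ^ 4 * Real.exp (-r ^ 2 / 2) := by
    intro x hx r
    have hE : (0:ℝ) ≤ Real.exp (-r ^ 2 / 2) := (Real.exp_pos _).le
    have h1 : (1:ℝ) ≤ (1 + x * Real.exp (-r ^ 2 / 2)) ^ 2 := by nlinarith [mul_nonneg hx hE, sq_nonneg (x * Real.exp (-r ^ 2 / 2))]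
    rw [Real.norm_eq_abs, abs_of_nonneg (by positivity)]
    exact div_le_self (by positivity) h1
  -- integrability of F α
  have hFint : IntegrableOn
      (fun r : ℝ => r ^ 4 * (α * Real.exp (-r ^ 2 / 2)) / (1 + α * Real.exp (-r ^ 2 / 2))) (Ioi 0) := by
    refine Integrable.mono' ((fermiAux_int_pow_exp 4).const_mul α) (meas α) ?_
    filter_upwards with r
    have hE : (0:ℝ) ≤ Real.exp (-r ^ 2 / 2) := (Real.exp_pos _).le
    have h1 : (1:ℝ) ≤ 1 + α * Real.exp (-r ^ 2 / 2) := by nlinarith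
    rw [Real.norm_eq_abs, abs_of_nonneg (by positivity)]
    calc r ^ 4 * (α * Real.exp (-r ^ 2 / 2)) / (1 + α * Real.exp (-r ^ 2 / 2))
        ≤ r ^ 4 * (α * Real.exp (-r ^ 2 / 2)) := div_le_self (by positivity) h1
      _ = α * (r ^ 4 * Real.exp (-r ^ 2 / 2)) := by ring
  -- differentiation under the integral sign
  have key := hasDerivAt_integral_of_dominated_loc_of_deriv_le
    (F := fun x r => r ^ 4 * (x * Real.exp (-r ^ 2 / 2)) / (1 + x * Real.exp (-r ^ 2 / 2)))
    (F' := fun x r => r ^ 4 * Real.exp (-r ^ 2 / 2) / (1 + x * Real.exp (-r ^ 2 / 2)) ^ 2)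
    (bound := fun r => r ^ 4 * Real.exp (-r ^ 2 / 2))
    (μ := volume.restrict (Ioi 0)) (x₀ := α) (s := ball α (α / 2)) (ball_mem_nhds α (half_pos hα))
    (Filter.Eventually.of_forall meas) hFint meas'
    (by
      filter_upwards with r
      intro x hx
      rw [Metric.mem_ball, Real.dist_eq] at hx
      have hx0 : 0 ≤ x := by cases abs_lt.1 hx with | intro h1 h2 => linarith
      exact hbound1 x hx0 r)
    (fermiAux_int_pow_exp 4)
    (by
      filter_upwards with r
      intro x hx
      rw [Metric.mem_ball, Real.dist_eq] at hx
      have hx0 : 0 < x := by cases abs_lt.1 hx with | intro h1 h2 => linarith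
      exact fermiAux_hasDerivAt_param r hx0)
  have hderiv2 : HasDerivAt (fermiIntegral 2)
      (C * ∫ r in Ioi (0:ℝ), r ^ 4 * Real.exp (-r ^ 2 / 2) / (1 + α * Real.exp (-r ^ 2 / 2)) ^ 2) α := by
    rw [h2]
    exact HasDerivAt.const_mul C key.2
  -- integrability of the two pieces of the by-parts identity
  have hIntB : IntegrableOn
      (fun r : ℝ => α * (r ^ 4 * Real.exp (-r ^ 2 / 2) / (1 + α * Real.exp (-r ^ 2 / 2)) ^ 2)) (Ioi 0) := by
    refine Integrable.mono' ((fermiAux_int_pow_exp 4).const_mul α)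
      ((by fun_prop : Measurable (fun r : ℝ => α *
        (r ^ 4 * Real.exp (-r ^ 2 / 2) / (1 + α * Real.exp (-r ^ 2 / 2)) ^ 2))).aestronglyMeasurable) ?_
    filter_upwards with r
    rw [norm_mul, Real.norm_eq_abs α, abs_of_nonneg hα.le]
    exact mul_le_mul_of_nonneg_left (hbound1 α hα.le r) hα.le
  have hIntA : IntegrableOn
      (fun r : ℝ => 3 * r ^ 2 * (α * Real.exp (-r ^ 2 / 2)) / (1 + α * Real.exp (-r ^ 2 / 2))) (Ioi 0) := by
    refine Integrable.mono' (((fermiAux_int_pow_exp 2).const_mul α).const_mul 3)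
      ((by fun_prop : Measurable (fun r : ℝ =>
        3 * r ^ 2 * (α * Real.exp (-r ^ 2 / 2)) / (1 + α * Real.exp (-r ^ 2 / 2)))).aestronglyMeasurable) ?_
    filter_upwards with r
    have hE : (0:ℝ) ≤ Real.exp (-r ^ 2 / 2) := (Real.exp_pos _).le
    have h1 : (1:ℝ) ≤ 1 + α * Real.exp (-r ^ 2 / 2) := by nlinarith
    rw [Real.norm_eq_abs, abs_of_nonneg (by positivity)]
    calc 3 * r ^ 2 * (α * Real.exp (-r ^ 2 / 2)) / (1 + α * Real.exp (-r ^ 2 / 2))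
        ≤ 3 * r ^ 2 * (α * Real.exp (-r ^ 2 / 2)) := div_le_self (by positivity) h1
      _ = 3 * (α * (r ^ 2 * Real.exp (-r ^ 2 / 2))) := by ring
  -- the boundary term vanishes at infinity
  have htend : Tendsto
      (fun r : ℝ => r ^ 3 * (α * Real.exp (-r ^ 2 / 2)) / (1 + α * Real.exp (-r ^ 2 / 2)))
      atTop (nhds 0) := by
    have hg : Tendsto (fun r : ℝ => α * (r ^ 3 * Real.exp (-r))) atTop (nhds (α * 0)) :=
      (tendsto_pow_mul_exp_neg_atTop_nhds_zero 3).const_mul α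
    rw [mul_zero] at hg
    refine squeeze_zero' ?_ ?_ hg
    · filter_upwards [eventually_ge_atTop (0:ℝ)] with r hr
      have hE : (0:ℝ) < Real.exp (-r ^ 2 / 2) := Real.exp_pos _
      exact div_nonneg (mul_nonneg (pow_nonneg hr 3) (by positivity)) (by positivity)
    · filter_upwards [eventually_ge_atTop (2:ℝ)] with r hr
      have hE : (0:ℝ) ≤ Real.exp (-r ^ 2 / 2) := (Real.exp_pos _).le
      have h1 : (1:ℝ) ≤ 1 + α * Real.exp (-r ^ 2 / 2) := by nlinarith
      have h2' : Real.exp (-r ^ 2 / 2) ≤ Real.exp (-r) := by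
        apply Real.exp_le_exp.2; nlinarith
      have h3 : (0:ℝ) ≤ r ^ 3 := pow_nonneg (by linarith) 3
      calc r ^ 3 * (α * Real.exp (-r ^ 2 / 2)) / (1 + α * Real.exp (-r ^ 2 / 2))
          ≤ r ^ 3 * (α * Real.exp (-r ^ 2 / 2)) := div_le_self (by positivity) h1
        _ = α * (r ^ 3 * Real.exp (-r ^ 2 / 2)) := by ring
        _ ≤ α * (r ^ 3 * Real.exp (-r)) := by
            nlinarith [mul_nonneg (mul_nonneg hα.le h3) (sub_nonneg.2 h2')]
  -- integration by parts: the integral of the derivative is zero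
  have hibp : (∫ r in Ioi (0:ℝ),
      (3 * r ^ 2 * (α * Real.exp (-r ^ 2 / 2)) / (1 + α * Real.exp (-r ^ 2 / 2))
        - α * (r ^ 4 * Real.exp (-r ^ 2 / 2) / (1 + α * Real.exp (-r ^ 2 / 2)) ^ 2))) = 0 := by
    have h := integral_Ioi_of_hasDerivAt_of_tendsto' (a := (0:ℝ))
      (f := fun s : ℝ => s ^ 3 * (α * Real.exp (-s ^ 2 / 2)) / (1 + α * Real.exp (-s ^ 2 / 2)))
      (fun x _ => fermiAux_hasDerivAt_rad α hα x) (hIntA.sub hIntB) htend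
    rw [h]
    norm_num
  have hsub := integral_sub hIntA hIntB
  have hsplit : (∫ r in Ioi (0:ℝ), 3 * r ^ 2 * (α * Real.exp (-r ^ 2 / 2)) / (1 + α * Real.exp (-r ^ 2 / 2)))
      = ∫ r in Ioi (0:ℝ), α * (r ^ 4 * Real.exp (-r ^ 2 / 2) / (1 + α * Real.exp (-r ^ 2 / 2)) ^ 2) := by
    rw [hibp] at hsub
    linarith
  -- chain of equalities
  have echain : α * (∫ r in Ioi (0:ℝ), r ^ 4 * Real.exp (-r ^ 2 / 2) / (1 + α * Real.exp (-r ^ 2 / 2)) ^ 2)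
      = 3 * ∫ r in Ioi (0:ℝ), r ^ 2 * (α * Real.exp (-r ^ 2 / 2)) / (1 + α * Real.exp (-r ^ 2 / 2)) := by
    have e1 : (fun r : ℝ => 3 * r ^ 2 * (α * Real.exp (-r ^ 2 / 2)) / (1 + α * Real.exp (-r ^ 2 / 2)))
        = fun r : ℝ => 3 * (r ^ 2 * (α * Real.exp (-r ^ 2 / 2)) / (1 + α * Real.exp (-r ^ 2 / 2))) := by
      funext r; ring
    calc α * (∫ r in Ioi (0:ℝ), r ^ 4 * Real.exp (-r ^ 2 / 2) / (1 + α * Real.exp (-r ^ 2 / 2)) ^ 2)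
        = ∫ r in Ioi (0:ℝ), α * (r ^ 4 * Real.exp (-r ^ 2 / 2) / (1 + α * Real.exp (-r ^ 2 / 2)) ^ 2) :=
          (integral_const_mul α _).symm
      _ = ∫ r in Ioi (0:ℝ), 3 * r ^ 2 * (α * Real.exp (-r ^ 2 / 2)) / (1 + α * Real.exp (-r ^ 2 / 2)) :=
          hsplit.symm
      _ = ∫ r in Ioi (0:ℝ), 3 * (r ^ 2 * (α * Real.exp (-r ^ 2 / 2)) / (1 + α * Real.exp (-r ^ 2 / 2))) := by
          rw [e1]
      _ = 3 * ∫ r in Ioi (0:ℝ), r ^ 2 * (α * Real.exp (-r ^ 2 / 2)) / (1 + α * Real.exp (-r ^ 2 / 2)) :=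
          integral_const_mul 3 _
  refine ⟨hderiv2.differentiableAt, ?_⟩
  rw [hderiv2.deriv, h0]
  rw [show α * (C * ∫ r in Ioi (0:ℝ), r ^ 4 * Real.exp (-r ^ 2 / 2) / (1 + α * Real.exp (-r ^ 2 / 2)) ^ 2)
      = C * (α * ∫ r in Ioi (0:ℝ), r ^ 4 * Real.exp (-r ^ 2 / 2) / (1 + α * Real.exp (-r ^ 2 / 2)) ^ 2) by ring,
    echain]
  ring
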